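/- Let m, n, r, s be positive integers with r ≤ min(m,n) and s ≤ mn, and let μ ≥ 1. If L ∈ ℝ^{m×n} is a μ-incoherent matrix of rank at most r and S ∈ ℝ^{m×n} has at most s nonzero entries, then |⟨L,S⟩| ≤ μ · (r√s / √(mn)) · ‖L‖_F · ‖S‖_F. -/

import Mathlib

open scoped BigOperators
open Matrix

noncomputable section

def mInner {m n : ℕ} (A B : Matrix (Fin m) (Fin n) ℝ) : ℝ := ∑ i, ∑ j, A i j * B i j

def frobSq {m n : ℕ} (A : Matrix (Fin m) (Fin n) ℝ) : ℝ := ∑ i, ∑ j, (A i j) ^ 2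

def frobNorm {m n : ℕ} (A : Matrix (Fin m) (Fin n) ℝ) : ℝ := Real.sqrt (frobSq A)

def vInner {p : ℕ} (u v : Fin p → ℝ) : ℝ := ∑ i, u i * v i

def vNormSq {p : ℕ} (v : Fin p → ℝ) : ℝ := ∑ i, (v i) ^ 2

def vNorm {p : ℕ} (v : Fin p → ℝ) : ℝ := Real.sqrt (vNormSq v)

/-- Number of nonzero entries of a matrix. -/
def sparseCount {m n : ℕ} (S : Matrix (Fin m) (Fin n) ℝ) : ℕ :=
  {q : Fin m × Fin n | S q.1 q.2 ≠ 0}.ncard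

/-- `L` is `μ`-incoherent of rank at most `r`: `rank L ≤ r` and `L` admits a (truncated)
singular value decomposition `L = U * diagonal d * Vᵀ` with `U ∈ ℝ^{m×r}`, `V ∈ ℝ^{n×r}`
having orthonormal columns (the top `r` left/right singular vectors) whose rows satisfy
`‖Uᵀ eᵢ‖₂ ≤ √(μ r / m)` and `‖Vᵀ fⱼ‖₂ ≤ √(μ r / n)`. -/
def Incoherent {m n : ℕ} (μ : ℝ) (r : ℕ) (L : Matrix (Fin m) (Fin n) ℝ) : Prop :=
  L.rank ≤ r ∧
  ∃ (U : Matrix (Fin m) (Fin r) ℝ) (d : Fin r → ℝ) (V : Matrix (Fin n) (Fin r) ℝ),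
    Uᵀ * U = 1 ∧ Vᵀ * V = 1 ∧ (∀ k, 0 ≤ d k) ∧ L = U * Matrix.diagonal d * Vᵀ ∧
    (∀ i : Fin m, Real.sqrt (∑ k, (U i k) ^ 2) ≤ Real.sqrt (μ * r / m)) ∧
    (∀ j : Fin n, Real.sqrt (∑ k, (V j k) ^ 2) ≤ Real.sqrt (μ * r / n))

/-- The set of low-rank plus sparse matrices `LS_{m,n}(r,s,μ)`. -/
def LS (m n r s : ℕ) (μ : ℝ) : Set (Matrix (Fin m) (Fin n) ℝ) :=
  {X | ∃ L S : Matrix (Fin m) (Fin n) ℝ,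
      X = L + S ∧ Incoherent μ r L ∧ sparseCount S ≤ s}

/-- rank-sparsity correlation bound for incoherent matrices. -/
theorem incoherent_sparse_inner_bound
    (m n r s : ℕ) (hm : 0 < m) (hn : 0 < n) (hr0 : 0 < r) (hs0 : 0 < s)
    (hr : r ≤ min m n) (hs : s ≤ m * n) (μ : ℝ) (hμ : 1 ≤ μ)
    (L S : Matrix (Fin m) (Fin n) ℝ)
    (hL : Incoherent μ r L) (hS : sparseCount S ≤ s) :
    |mInner L S| ≤ μ * ((r : ℝ) * Real.sqrt s / Real.sqrt (m * n)) * frobNorm L * frobNorm S := by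
  obtain ⟨-, U, d, V, hU, hV, hd, hLdef, hUrow, hVrow⟩ := hL
  have hμr : (0:ℝ) ≤ μ * r := by positivity
  have hmn : (0:ℝ) < (m:ℝ) * n := by positivity
  -- Frobenius norm of L in terms of singular values
  have hfs : frobSq L = ∑ k, d k ^ 2 := by
    have h1 : frobSq L = Matrix.trace (Lᵀ * L) := by
      simp only [frobSq, Matrix.trace, Matrix.diag, Matrix.mul_apply,
        Matrix.transpose_apply, sq]
      rw [Finset.sum_comm]
    have h2 : (U * Matrix.diagonal d * Vᵀ)ᵀ * (U * Matrix.diagonal d * Vᵀ)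
        = V * (Matrix.diagonal d * Matrix.diagonal d) * Vᵀ := by
      simp only [Matrix.transpose_mul, Matrix.transpose_transpose, Matrix.diagonal_transpose,
        Matrix.mul_assoc]
      rw [show Uᵀ * (U * (Matrix.diagonal d * Vᵀ)) = Matrix.diagonal d * Vᵀ by
        rw [← Matrix.mul_assoc, hU, Matrix.one_mul]]
    rw [h1, hLdef, h2, Matrix.trace_mul_cycle, ← Matrix.mul_assoc, hV, Matrix.one_mul,
      Matrix.diagonal_mul_diagonal, Matrix.trace_diagonal]
    exact Finset.sum_congr rfl fun k _ => (sq (d k)).symm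
  have hdk : ∀ k, d k ≤ frobNorm L := by
    intro k
    rw [show d k = Real.sqrt (d k ^ 2) from (Real.sqrt_sq (hd k)).symm, frobNorm, hfs]
    exact Real.sqrt_le_sqrt
      (Finset.single_le_sum (fun i _ => sq_nonneg (d i)) (Finset.mem_univ k))
  have hLnn : 0 ≤ frobNorm L := Real.sqrt_nonneg _
  have hSnn : 0 ≤ frobNorm S := Real.sqrt_nonneg _
  set c : ℝ := μ * r / Real.sqrt ((m:ℝ) * n) with hc
  have hcnn : 0 ≤ c := by positivity
  -- entrywise bound on L
  have hentry : ∀ i j, |L i j| ≤ c * frobNorm L := by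
    intro i j
    have hLij : L i j = ∑ k, U i k * d k * V j k := by
      rw [hLdef]
      simp [Matrix.mul_apply, Matrix.diagonal_apply, ite_mul, Finset.mul_sum]
    have hUi : ∑ k, (U i k) ^ 2 ≤ μ * r / m :=
      (Real.sqrt_le_sqrt_iff (by positivity)).mp (hUrow i)
    have hVj : ∑ k, (V j k) ^ 2 ≤ μ * r / n :=
      (Real.sqrt_le_sqrt_iff (by positivity)).mp (hVrow j)
    have h0 : (0:ℝ) ≤ ∑ k, |U i k| * |V j k| :=
      Finset.sum_nonneg fun k _ => mul_nonneg (abs_nonneg _) (abs_nonneg _)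
    have hcs : (∑ k, |U i k| * |V j k|) ^ 2 ≤ (μ * r)^2 / ((m:ℝ) * n) := by
      calc (∑ k, |U i k| * |V j k|) ^ 2
          ≤ (∑ k, |U i k| ^ 2) * (∑ k, |V j k| ^ 2) :=
            Finset.sum_mul_sq_le_sq_mul_sq _ _ _
        _ = (∑ k, (U i k) ^ 2) * (∑ k, (V j k) ^ 2) := by simp [sq_abs]
        _ ≤ (μ * r / m) * (μ * r / n) := by
            exact mul_le_mul hUi hVj (Finset.sum_nonneg fun k _ => sq_nonneg _)
              (by positivity)
        _ = (μ * r)^2 / ((m:ℝ) * n) := by field_simp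
    have hcs' : ∑ k, |U i k| * |V j k| ≤ c := by
      have : ∑ k, |U i k| * |V j k| ≤ Real.sqrt ((μ * r)^2 / ((m:ℝ) * n)) :=
        (Real.le_sqrt h0 (by positivity)).mpr hcs
      calc ∑ k, |U i k| * |V j k| ≤ Real.sqrt ((μ * r)^2 / ((m:ℝ) * n)) := this
        _ = c := by
            rw [Real.sqrt_div (by positivity), Real.sqrt_sq hμr]
    calc |L i j| = |∑ k, U i k * d k * V j k| := by rw [hLij]
      _ ≤ ∑ k, |U i k * d k * V j k| := Finset.abs_sum_le_sum_abs _ _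
      _ = ∑ k, |U i k| * |V j k| * d k := by
          refine Finset.sum_congr rfl fun k _ => ?_
          rw [abs_mul, abs_mul, abs_of_nonneg (hd k)]; ring
      _ ≤ ∑ k, |U i k| * |V j k| * frobNorm L :=
          Finset.sum_le_sum fun k _ => mul_le_mul_of_nonneg_left (hdk k)
            (mul_nonneg (abs_nonneg _) (abs_nonneg _))
      _ = (∑ k, |U i k| * |V j k|) * frobNorm L := by rw [← Finset.sum_mul]
      _ ≤ c * frobNorm L := mul_le_mul_of_nonneg_right hcs' hLnn
  -- sparse support
  classical
  set T : Finset (Fin m × Fin n) := Finset.univ.filter (fun q => S q.1 q.2 ≠ 0) with hT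
  have hTcard : T.card ≤ s := by
    have : sparseCount S = T.card := by
      rw [sparseCount, Set.ncard_eq_toFinset_card', Set.toFinset_setOf]
    omega
  have hsumT : ∑ q ∈ T, |S q.1 q.2| ≤ Real.sqrt s * frobNorm S := by
    have hsq : (∑ q ∈ T, |S q.1 q.2|) ^ 2 ≤ (s : ℝ) * frobSq S := by
      calc (∑ q ∈ T, |S q.1 q.2|) ^ 2 = (∑ q ∈ T, 1 * |S q.1 q.2|) ^ 2 := by simp
        _ ≤ (∑ q ∈ T, (1:ℝ)^2) * (∑ q ∈ T, |S q.1 q.2| ^ 2) :=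
            Finset.sum_mul_sq_le_sq_mul_sq _ _ _
        _ = (T.card : ℝ) * (∑ q ∈ T, (S q.1 q.2) ^ 2) := by simp [sq_abs]
        _ ≤ (s : ℝ) * frobSq S := by
            refine mul_le_mul ?_ ?_ (Finset.sum_nonneg fun q _ => sq_nonneg _)
              (by positivity)
            · exact_mod_cast hTcard
            · rw [show frobSq S = ∑ q : Fin m × Fin n, (S q.1 q.2)^2 by
                rw [Fintype.sum_prod_type]; rfl]
              exact Finset.sum_le_sum_of_subset_of_nonneg (Finset.subset_univ T)
                fun q _ _ => sq_nonneg _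
    have h0 : (0:ℝ) ≤ ∑ q ∈ T, |S q.1 q.2| := Finset.sum_nonneg fun q _ => abs_nonneg _
    have hfSnn : (0:ℝ) ≤ frobSq S :=
      Finset.sum_nonneg fun i _ => Finset.sum_nonneg fun j _ => sq_nonneg _
    calc ∑ q ∈ T, |S q.1 q.2| ≤ Real.sqrt ((s : ℝ) * frobSq S) :=
        (Real.le_sqrt h0 (mul_nonneg (by positivity) hfSnn)).mpr hsq
      _ = Real.sqrt s * frobNorm S := by
          rw [Real.sqrt_mul (by positivity)]; rfl
  have hmain : |mInner L S| ≤ c * frobNorm L * (Real.sqrt s * frobNorm S) := by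
    have h1 : mInner L S = ∑ q : Fin m × Fin n, L q.1 q.2 * S q.1 q.2 := by
      rw [Fintype.sum_prod_type]; rfl
    have h2 : ∑ q : Fin m × Fin n, L q.1 q.2 * S q.1 q.2
        = ∑ q ∈ T, L q.1 q.2 * S q.1 q.2 := by
      refine (Finset.sum_subset (Finset.subset_univ T) ?_).symm
      intro q _ hq
      simp only [hT, Finset.mem_filter, Finset.mem_univ, true_and, not_not] at hq
      simp [hq]
    calc |mInner L S| = |∑ q ∈ T, L q.1 q.2 * S q.1 q.2| := by rw [h1, h2]
      _ ≤ ∑ q ∈ T, |L q.1 q.2 * S q.1 q.2| := Finset.abs_sum_le_sum_abs _ _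
      _ = ∑ q ∈ T, |L q.1 q.2| * |S q.1 q.2| := by
          exact Finset.sum_congr rfl fun q _ => abs_mul _ _
      _ ≤ ∑ q ∈ T, (c * frobNorm L) * |S q.1 q.2| :=
          Finset.sum_le_sum fun q _ =>
            mul_le_mul_of_nonneg_right (hentry q.1 q.2) (abs_nonneg _)
      _ = (c * frobNorm L) * ∑ q ∈ T, |S q.1 q.2| := by rw [← Finset.mul_sum]
      _ ≤ (c * frobNorm L) * (Real.sqrt s * frobNorm S) :=
          mul_le_mul_of_nonneg_left hsumT (by positivity)
  calc |mInner L S| ≤ c * frobNorm L * (Real.sqrt s * frobNorm S) := hmain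
    _ = μ * ((r : ℝ) * Real.sqrt s / Real.sqrt ((m:ℝ) * n)) * frobNorm L * frobNorm S := by
        rw [hc]; ring
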